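/- Let S ∈ C_{ρ,h} be compact, let ℵ_n ⊂ S be a finite set with ε_n = d_H(ℵ_n, S), and set k = 3 + 2/sin(ρ/2). If 2ε_n/sin(ρ/2) < h/2, then the inner parallel set S ⊖ kε_n B(0,1) = {x ∈ S : B(x, kε_n) ⊂ S} is contained in the ρ,h-cone-convex hull ℂ_{ρ,h}(ℵ_n). -/

import Mathlib

open MeasureTheory Metric Set Filter

noncomputable section

/-- The open finite cone with vertex `x`, axis `ξ`, opening angle `ρ` and height `h`. -/
def fcone (d : ℕ) (ρ h : ℝ) (x ξ : EuclideanSpace ℝ (Fin d)) :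
    Set (EuclideanSpace ℝ (Fin d)) :=
  {z | z ≠ x ∧ (inner ℝ ξ (‖z - x‖⁻¹ • (z - x)) : ℝ) > Real.cos (ρ / 2)} ∩ Metric.ball x h

/-- `S` is `ρ,h`-cone-convex. -/
def ConeConvex (d : ℕ) (ρ h : ℝ) (S : Set (EuclideanSpace ℝ (Fin d))) : Prop :=
  ∀ x ∈ frontier S, ∃ ξ : EuclideanSpace ℝ (Fin d), ‖ξ‖ = 1 ∧ fcone d ρ h x ξ ⊆ Sᶜ

/-- The `ρ,h`-cone-convex hull by complement. -/
def cccHull (d : ℕ) (ρ h : ℝ) (S : Set (EuclideanSpace ℝ (Fin d))) :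
    Set (EuclideanSpace ℝ (Fin d)) :=
  ⋂₀ {A | ∃ y ξ : EuclideanSpace ℝ (Fin d),
      ‖ξ‖ = 1 ∧ fcone d ρ h y ξ ∩ S = ∅ ∧ A = (fcone d ρ h y ξ)ᶜ}

/-- The `ρ,h`-cone-convex hull: intersection of all compact `ρ,h`-cone-convex supersets. -/
def ccHull (d : ℕ) (ρ h : ℝ) (S : Set (EuclideanSpace ℝ (Fin d))) :
    Set (EuclideanSpace ℝ (Fin d)) :=
  ⋂₀ {B | S ⊆ B ∧ IsCompact B ∧ B.Nonempty ∧ ConeConvex d ρ h B}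


private lemma aux_cone_ineq (c sρ t s r m ε : ℝ) (hsρ : 0 < sρ) (hsρ1 : sρ ≤ 1)
    (hc0 : 0 ≤ c) (hpyth : sρ ^ 2 + c ^ 2 = 1) (htsρ : sρ * t = 2 * ε)
    (hεpos : 0 < ε) (hr : r ≤ ε) (hr0 : 0 ≤ r) (hs : |s| ≤ r)
    (hm2 : m ^ 2 = t ^ 2 + 2 * (t * s) + r ^ 2) (hmge : t - ε ≤ m) (hm0 : 0 < m) :
    c * m < t + s := by
  obtain ⟨hs1, hs2⟩ := abs_le.mp hs
  have ht0 : 0 < t := by nlinarith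
  have ht2ε : 2 * ε ≤ t := by nlinarith
  have hts : ε ≤ t + s := by nlinarith
  rcases eq_or_lt_of_le hc0 with hc | hc
  · rw [← hc, zero_mul]; linarith
  · have hsρlt1 : sρ < 1 := by nlinarith
    have h1 : ε < sρ * m := by nlinarith
    have h1sq : ε ^ 2 < sρ ^ 2 * m ^ 2 := by nlinarith
    have hc2 : c ^ 2 = 1 - sρ ^ 2 := by linarith
    have h2 : (c * m) ^ 2 < (t + s) ^ 2 := by
      have e1 : (c * m) ^ 2 = m ^ 2 - sρ ^ 2 * m ^ 2 := by rw [mul_pow, hc2]; ring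
      have e2 : (t + s) ^ 2 = m ^ 2 - r ^ 2 + s ^ 2 := by linear_combination -hm2
      rw [e1, e2]
      nlinarith [sq_nonneg s]
    nlinarith [mul_pos hc hm0]

set_option maxHeartbeats 1000000 in
theorem stmt_13 {d : ℕ} {ρ h : ℝ} (hρ : ρ ∈ Set.Ioc 0 Real.pi) (hh : 0 < h)
    (S A : Set (EuclideanSpace ℝ (Fin d))) (hS : IsCompact S)
    (hcc : ConeConvex d ρ h S) (hA : A.Finite) (hAne : A.Nonempty) (hAS : A ⊆ S)
    (ε : ℝ) (hε : ε = Metric.hausdorffDist A S)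
    (hsmall : 2 * ε / Real.sin (ρ / 2) < h / 2) :
    {x ∈ S | Metric.closedBall x ((3 + 2 / Real.sin (ρ / 2)) * ε) ⊆ S} ⊆
      ccHull d ρ h A := by
  obtain ⟨hρ0, hρπ⟩ := hρ
  set sρ := Real.sin (ρ / 2) with hsρdef
  clear_value sρ
  have hsρ : 0 < sρ := by
    rw [hsρdef]
    exact Real.sin_pos_of_pos_of_lt_pi (by linarith) (by linarith [Real.pi_pos])
  have hsρ1 : sρ ≤ 1 := by rw [hsρdef]; exact Real.sin_le_one _
  have hc0 : 0 ≤ Real.cos (ρ / 2) :=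
    Real.cos_nonneg_of_mem_Icc ⟨by linarith [Real.pi_pos], by linarith⟩
  have hSne : S.Nonempty := hAne.mono hAS
  have hedist : EMetric.hausdorffEdist A S ≠ ⊤ :=
    Metric.hausdorffEdist_ne_top_of_nonempty_of_bounded hAne hSne
      hA.isCompact.isBounded hS.isBounded
  have hedist' : EMetric.hausdorffEdist S A ≠ ⊤ := by
    show Metric.hausdorffEDist S A ≠ ⊤
    rwa [Metric.hausdorffEDist_comm]
  have hεnn : 0 ≤ ε := hε ▸ Metric.hausdorffDist_nonneg
  intro x hx
  obtain ⟨hxS, hball⟩ := hx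
  intro B hB
  obtain ⟨hAB, hBcomp, hBne, hBcc⟩ := hB
  have hxA : Metric.infDist x A ≤ ε := by
    have := Metric.infDist_le_hausdorffDist_of_mem hxS hedist'
    rwa [Metric.hausdorffDist_comm, ← hε] at this
  rcases eq_or_lt_of_le hεnn with hε0 | hεpos
  · -- ε = 0 : x is in the closure of A, hence in A ⊆ B
    have : Metric.infDist x A ≤ 0 := by linarith
    have hx0 : Metric.infDist x A = 0 := le_antisymm this Metric.infDist_nonneg
    have : x ∈ closure A := by
      rw [Metric.mem_closure_iff_infDist_zero hAne]; exact hx0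
    rw [hA.isClosed.closure_eq] at this
    exact hAB this
  · by_contra hxB
    -- nearest point y of B to x
    obtain ⟨y, hyB, hy⟩ := hBcomp.exists_infDist_eq_dist hBne x
    have hxy : x ≠ y := fun h => hxB (h ▸ hyB)
    have hdxy0 : 0 < dist x y := dist_pos.mpr hxy
    have hdxy : dist x y ≤ ε := by
      rw [← hy]
      calc Metric.infDist x B ≤ Metric.infDist x A :=
            Metric.infDist_le_infDist_of_subset hAB hAne
        _ ≤ ε := hxA
    -- y is a frontier point of B
    have hyfr : y ∈ frontier B := by
      refine ⟨subset_closure hyB, fun hint => ?_⟩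
      rw [mem_interior_iff_mem_nhds, Metric.mem_nhds_iff] at hint
      obtain ⟨δ, hδ, hδball⟩ := hint
      set θ : ℝ := min (1/2) (δ / (2 * dist x y)) with hθdef
      have hθ0 : 0 < θ := lt_min (by norm_num) (div_pos hδ (by linarith))
      have hθhalf : θ ≤ 1/2 := min_le_left _ _
      set w : EuclideanSpace ℝ (Fin d) := y + θ • (x - y) with hwdef
      have hwy : dist w y = θ * dist x y := by
        rw [dist_eq_norm, dist_eq_norm]
        have : w - y = θ • (x - y) := by rw [hwdef]; abel
        rw [this, norm_smul, Real.norm_eq_abs, abs_of_pos hθ0]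
      have hwB : w ∈ B := by
        apply hδball
        rw [Metric.mem_ball, hwy]
        calc θ * dist x y ≤ (δ / (2 * dist x y)) * dist x y :=
              mul_le_mul_of_nonneg_right (min_le_right _ _) dist_nonneg
          _ = δ / 2 := by field_simp
          _ < δ := by linarith
      have hxw : dist x w = (1 - θ) * dist x y := by
        rw [dist_eq_norm, dist_eq_norm]
        have : x - w = (1 - θ) • (x - y) := by
          rw [hwdef, sub_smul, one_smul]; abel
        rw [this, norm_smul, Real.norm_eq_abs, abs_of_pos (by linarith : (0:ℝ) < 1 - θ)]
      have h1 : Metric.infDist x B ≤ dist x w := Metric.infDist_le_dist_of_mem hwB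
      rw [hxw, ← hy] at h1
      nlinarith [hy ▸ hdxy0]
    obtain ⟨ξ, hξ1, hξ2⟩ := hBcc y hyfr
    -- the deep point z of the cone
    set t : ℝ := 2 * ε / sρ with htdef
    clear_value t
    have ht0 : 0 < t := by rw [htdef]; exact div_pos (by linarith) hsρ
    have htsρ : sρ * t = 2 * ε := by rw [htdef]; field_simp
    have ht2ε : 2 * ε ≤ t := by nlinarith
    have hth : t < h / 2 := hsmall
    have hεh : ε < h / 4 := by nlinarith
    set z : EuclideanSpace ℝ (Fin d) := y + t • ξ with hzdef
    clear_value z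
    have hzy : dist z y = t := by
      rw [dist_eq_norm]
      have : z - y = t • ξ := by rw [hzdef]; abel
      rw [this, norm_smul, hξ1, Real.norm_eq_abs, abs_of_pos ht0, mul_one]
    have hzS : z ∈ S := by
      apply hball
      rw [Metric.mem_closedBall]
      calc dist z x ≤ dist z y + dist y x := dist_triangle _ _ _
        _ ≤ t + ε := by rw [hzy, dist_comm]; linarith
        _ ≤ (3 + 2 / sρ) * ε := by
            have : (3 + 2 / sρ) * ε = 3 * ε + t := by rw [htdef]; ring
            linarith [this]
    -- a point a of A close to z
    have hzA : Metric.infDist z A ≤ ε := by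
      have := Metric.infDist_le_hausdorffDist_of_mem hzS hedist'
      rwa [Metric.hausdorffDist_comm, ← hε] at this
    obtain ⟨a, haA, ha⟩ := hA.isCompact.exists_infDist_eq_dist hAne z
    have hza : dist z a ≤ ε := ha ▸ hzA
    have haB : a ∈ B := hAB haA
    -- show a is in the cone, contradiction
    set u : EuclideanSpace ℝ (Fin d) := a - z with hudef
    clear_value u
    have hru : ‖u‖ ≤ ε := by rw [hudef, ← dist_eq_norm, dist_comm]; exact hza
    have hay : a - y = t • ξ + u := by rw [hudef, hzdef]; abel
    set s : ℝ := (inner ℝ ξ u : ℝ) with hsdef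
    clear_value s
    have hsabs : |s| ≤ ‖u‖ := by
      rw [hsdef]
      calc |(inner ℝ ξ u : ℝ)| ≤ ‖ξ‖ * ‖u‖ := abs_real_inner_le_norm _ _
        _ = ‖u‖ := by rw [hξ1, one_mul]
    set m : ℝ := ‖a - y‖ with hmdef
    clear_value m
    set r : ℝ := ‖u‖ with hrdef
    clear_value r
    have hr0 : 0 ≤ r := by rw [hrdef]; exact norm_nonneg u
    have hrε : r ≤ ε := hru
    have hsabs' : |s| ≤ r := hsabs
    have hmle : m ≤ t + r := by
      rw [hmdef, hrdef, hay]
      calc ‖t • ξ + u‖ ≤ ‖t • ξ‖ + ‖u‖ := norm_add_le _ _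
        _ = t + ‖u‖ := by
            rw [norm_smul, hξ1, Real.norm_eq_abs, abs_of_pos ht0, mul_one]
    have hinner : (inner ℝ ξ (a - y) : ℝ) = t + s := by
      rw [hay, inner_add_right, real_inner_smul_right, real_inner_self_eq_norm_sq, hξ1,
        ← hsdef]
      ring
    have hm2 : m ^ 2 = t ^ 2 + 2 * (t * s) + r ^ 2 := by
      rw [hrdef]
      rw [hmdef, hay, norm_add_sq_real, norm_smul, Real.norm_eq_abs, abs_of_pos ht0, hξ1,
        real_inner_smul_left, ← hsdef]
      ring
    have hmge : t - ε ≤ m := by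
      have h1 : ‖z - y‖ - ‖a - z‖ ≤ ‖a - y‖ := by
        have := norm_sub_norm_le (z - y) (z - a)
        have e1 : z - y - (z - a) = a - y := by abel
        rw [e1] at this
        have e2 : ‖z - a‖ = ‖a - z‖ := norm_sub_rev _ _
        linarith [this, e2 ▸ this]
      have e3 : ‖z - y‖ = t := by rw [← dist_eq_norm, hzy]
      have e4 : ‖a - z‖ ≤ ε := by rw [norm_sub_rev, ← dist_eq_norm]; exact hza
      rw [hmdef]; rw [e3] at h1; linarith
    have hm0 : 0 < m := by nlinarith
    have haney : a ≠ y := by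
      intro hay'
      have h1 : m = 0 := by rw [hmdef, hay', sub_self, norm_zero]
      nlinarith
    -- a ∈ fcone
    have hafc : a ∈ fcone d ρ h y ξ := by
      constructor
      · refine ⟨haney, ?_⟩
        rw [real_inner_smul_right, hinner]
        rw [gt_iff_lt, ← hmdef, ← div_eq_inv_mul, lt_div_iff₀ hm0]
        have hpyth : sρ ^ 2 + Real.cos (ρ / 2) ^ 2 = 1 := by
          rw [hsρdef]; exact Real.sin_sq_add_cos_sq _
        exact aux_cone_ineq _ sρ t s r m ε hsρ hsρ1 hc0 hpyth htsρ hεpos hrε hr0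
          hsabs' hm2 hmge hm0
      · rw [Metric.mem_ball, dist_eq_norm, ← hmdef]
        linarith
    exact hξ2 hafc haB
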